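/- Let S, A, T, 𝒫 be as in the MDP context, I a finite index set, and let V_i : S × 𝒫 → ℝ (i ∈ I) and V_Σ : S × 𝒫 → ℝ be mixture-affine, satisfying the generalized Bellman form with reward/discount pairs (R_i, γ_i) and (R_Σ, γ_Σ) respectively, with γ_Σ(s,a) > 0. Fix s ∈ S and weights w_i(s) ∈ ℝ, and suppose V_Σ(s, a·Π) = Σ_{i∈I} w_i(s)·V_i(s, a·Π) for all a ∈ A and Π ∈ 𝒫. Define w_i(sa) := w_i(s)·γ_i(s,a). Then for every a ∈ A and Π ∈ 𝒫: γ_Σ(s,a)·V̄_Σ(s,a,Π) = (Σ_{i∈I} w_i(s)·R_i(s,a) − R_Σ(s,a)) + Σ_{i∈I} w_i(sa)·V̄_i(s,a,Π). In particular, Π ↦ V̄_Σ(s,a,Π) is a positive affine transformation of Π ↦ Σ_{i∈I} w_i(sa)·V̄_i(s,a,Π). -/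
import Mathlib


open scoped BigOperators

/-- The one-step expected value `V̄(s,a,π) = E_{s' ~ T(s,a)}[V(s',π)]`. -/
noncomputable def Vbar {S A P : Type*} [Fintype S]
    (T : S → A → S → ℝ) (V : S → P → ℝ) (s : S) (a : A) (π : P) : ℝ :=
  ∑ s', T s a s' * V s' π

/-- `V` is mixture-affine with respect to the policy-mixing operation `mix`. -/
def MixAffine {S P : Type*} (mix : ℝ → P → P → P) (V : S → P → ℝ) : Prop :=
  ∀ (s : S) (β : ℝ), 0 ≤ β → β ≤ 1 → ∀ π ω : P,
    V s (mix β π ω) = β * V s π + (1 - β) * V s ω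

/-- `V` satisfies the generalized Bellman form with reward `R` and discount `γ`. -/
def BellmanForm {S A P : Type*} [Fintype S] (T : S → A → S → ℝ) (act : A → P → P)
    (V : S → P → ℝ) (R : S → A → ℝ) (γ : S → A → ℝ) : Prop :=
  ∀ (s : S) (a : A) (π : P), V s (act a π) = R s a + γ s a * Vbar T V s a π

/-- The conflict condition for `(V1, V2)` at `(s, a)`: there are policies `π, ω, l`
on which the one-step expected values of `V1` and `V2` are oppositely ordered, with
non-symmetric crossing points `β1 ≠ β2`. -/
def Conflict {S A P : Type*} [Fintype S]
    (T : S → A → S → ℝ) (V1 V2 : S → P → ℝ) (s : S) (a : A) : Prop :=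
  ∃ π ω l : P,
    Vbar T V1 s a π > Vbar T V1 s a l ∧ Vbar T V1 s a l > Vbar T V1 s a ω ∧
    Vbar T V2 s a ω > Vbar T V2 s a l ∧ Vbar T V2 s a l > Vbar T V2 s a π ∧
    (Vbar T V1 s a l - Vbar T V1 s a ω) / (Vbar T V1 s a π - Vbar T V1 s a ω) ≠
      (Vbar T V2 s a l - Vbar T V2 s a ω) / (Vbar T V2 s a π - Vbar T V2 s a ω)

/-- **Discounted-weight aggregation identity (toward Theorem 5).** If the aggregate
`Vagg` equals the weighted sum `Σ_i w_i(s)·V_i` on prospects prefixed at state `s`, all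
value functions are mixture-affine with generalized Bellman forms, and `γagg > 0`, then
`γagg(s,a)·V̄agg(s,a,·)` equals a constant plus `Σ_i w_i(sa)·V̄_i(s,a,·)` with the
updated weights `w_i(sa) := w_i(s)·γ_i(s,a)`; in particular `V̄agg(s,a,·)` is a positive
affine transformation of `Σ_i w_i(sa)·V̄_i(s,a,·)`. -/
theorem discounted_weight_update
    {S A P I : Type*} [Fintype S] [Nonempty S] [Fintype A] [Nonempty A] [Fintype I]
    (T : S → A → S → ℝ)
    (hT0 : ∀ s a s', 0 ≤ T s a s') (hT1 : ∀ s a, ∑ s', T s a s' = 1)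
    (act : A → P → P) (mix : ℝ → P → P → P)
    (hact_mix : ∀ (a : A) (β : ℝ) (π ω : P), act a (mix β π ω) = mix β (act a π) (act a ω))
    (V : I → S → P → ℝ) (Vagg : S → P → ℝ)
    (haff : ∀ i, MixAffine mix (V i)) (haffagg : MixAffine mix Vagg)
    (R : I → S → A → ℝ) (γ : I → S → A → ℝ) (Ragg γagg : S → A → ℝ)
    (hB : ∀ i, BellmanForm T act (V i) (R i) (γ i))
    (hBagg : BellmanForm T act Vagg Ragg γagg)
    (hγaggpos : ∀ s a, 0 < γagg s a)
    (s : S) (w : I → ℝ)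
    (hagg : ∀ (a : A) (π : P), Vagg s (act a π) = ∑ i, w i * V i s (act a π)) :
    (∀ (a : A) (π : P),
        γagg s a * Vbar T Vagg s a π =
          ((∑ i, w i * R i s a) - Ragg s a) +
            ∑ i, (w i * γ i s a) * Vbar T (V i) s a π) ∧
    (∀ a : A, ∃ κ c' : ℝ, 0 < κ ∧ ∀ π : P,
        Vbar T Vagg s a π = κ * (∑ i, (w i * γ i s a) * Vbar T (V i) s a π) + c') := by
  have key : ∀ (a : A) (π : P),
      γagg s a * Vbar T Vagg s a π =
        ((∑ i, w i * R i s a) - Ragg s a) +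
          ∑ i, (w i * γ i s a) * Vbar T (V i) s a π := by
    intro a π
    have h1 := hBagg s a π
    have h2 := hagg a π
    rw [h1] at h2
    have h3 : ∀ i, V i s (act a π) = R i s a + γ i s a * Vbar T (V i) s a π :=
      fun i => hB i s a π
    simp only [h3] at h2
    have : ∑ i, w i * (R i s a + γ i s a * Vbar T (V i) s a π)
        = (∑ i, w i * R i s a) + ∑ i, (w i * γ i s a) * Vbar T (V i) s a π := by
      rw [← Finset.sum_add_distrib]; congr 1; ext i; ring
    rw [this] at h2
    linarith
  refine ⟨key, fun a => ⟨(γagg s a)⁻¹, ((∑ i, w i * R i s a) - Ragg s a) / γagg s a,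
    inv_pos.mpr (hγaggpos s a), fun π => ?_⟩⟩
  have h := key a π
  have hne := (hγaggpos s a).ne'
  field_simp
  linarith
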